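/- Let N ∈ ℕ, let M ∈ ℝ^{N×N} be diagonal with positive diagonal entries, and let D₊, D₋ ∈ ℝ^{N×N} satisfy M·D₊ + D₋ᵀ·M = 0 and D₊𝟙 = D₋𝟙 = 0, where 𝟙 ∈ ℝ^N is the all-ones vector. Set D = (D₊ + D₋)/2. Suppose η : ℝ → ℝ^N is differentiable and satisfies, for all t, η′(t) = −(1/3)·( D(η(t)∘η(t)) + η(t)∘(D η(t)) ) − D₊ D D₋ η(t), where ∘ is the entrywise product. Then both the discrete mass t ↦ 𝟙ᵀ M η(t) and the discrete energy t ↦ (1/2)·η(t)ᵀ M η(t) are constant in t. -/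

import Mathlib

open Matrix

private lemma diag_mulVec_apply {N : ℕ} {M : Matrix (Fin N) (Fin N) ℝ}
    (h : M.IsDiag) (v : Fin N → ℝ) (i : Fin N) : M.mulVec v i = M i i * v i := by
  unfold Matrix.mulVec dotProduct
  rw [Finset.sum_eq_single i]
  · intro j _ hj
    have : M i j = 0 := h (Ne.symm hj)
    simp [this]
  · intro hi; exact absurd (Finset.mem_univ i) hi

private lemma skew_pairing {N : ℕ} {A : Matrix (Fin N) (Fin N) ℝ}
    (h : Aᵀ = -A) (v w : Fin N → ℝ) : v ⬝ᵥ A.mulVec w = -(w ⬝ᵥ A.mulVec v) :=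
  calc v ⬝ᵥ A.mulVec w = (v ᵥ* A) ⬝ᵥ w := Matrix.dotProduct_mulVec v A w
    _ = (v ᵥ* (Aᵀ)ᵀ) ⬝ᵥ w := by rw [Matrix.transpose_transpose]
    _ = (Aᵀ.mulVec v) ⬝ᵥ w := by rw [Matrix.vecMul_transpose]
    _ = (-(A.mulVec v)) ⬝ᵥ w := by rw [h, Matrix.neg_mulVec]
    _ = -(w ⬝ᵥ A.mulVec v) := by rw [neg_dotProduct, dotProduct_comm]

private lemma skew_self {N : ℕ} {A : Matrix (Fin N) (Fin N) ℝ}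
    (h : Aᵀ = -A) (v : Fin N → ℝ) : v ⬝ᵥ A.mulVec v = 0 := by
  have := skew_pairing h v v
  linarith

/-- The split-form upwind SBP semidiscretization of KdV,
`η′ = −(1/3)(D(η∘η) + η∘(Dη)) − D₊DD₋η`, conserves the discrete mass `𝟙ᵀMη` and the
discrete energy `(1/2)ηᵀMη` for diagonal-norm consistent periodic upwind SBP
operators. -/
theorem kdv_semidiscretization_invariants (N : ℕ)
    (M Dp Dm : Matrix (Fin N) (Fin N) ℝ)
    (hMdiag : M.IsDiag) (hMpos : ∀ i, 0 < M i i)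
    (hSBP : M * Dp + Dm.transpose * M = 0)
    (hDp1 : Dp.mulVec (fun _ => 1) = 0) (hDm1 : Dm.mulVec (fun _ => 1) = 0)
    (D : Matrix (Fin N) (Fin N) ℝ) (hD : D = (1/2 : ℝ) • (Dp + Dm))
    (η : ℝ → Fin N → ℝ) (hη : Differentiable ℝ η)
    (hode : ∀ t : ℝ, deriv η t =
      -(1/3 : ℝ) • (D.mulVec (η t * η t) + η t * D.mulVec (η t))
        - (Dp * D * Dm).mulVec (η t)) :
    (∀ t₁ t₂ : ℝ,
      (fun _ => (1:ℝ)) ⬝ᵥ M.mulVec (η t₁) = (fun _ => (1:ℝ)) ⬝ᵥ M.mulVec (η t₂)) ∧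
    (∀ t₁ t₂ : ℝ,
      (1/2 : ℝ) * (η t₁ ⬝ᵥ M.mulVec (η t₁)) = (1/2 : ℝ) * (η t₂ ⬝ᵥ M.mulVec (η t₂))) := by
  have hMsymm : Mᵀ = M := hMdiag.isSymm
  -- basic SBP consequences
  have hMDp : M * Dp = -(Dmᵀ * M) := by
    have := hSBP
    rw [add_eq_zero_iff_eq_neg] at this
    exact this
  have hSBP2 : Dpᵀ * M + M * Dm = 0 := by
    have h := congrArg Matrix.transpose hSBP
    simp only [Matrix.transpose_add, Matrix.transpose_mul, Matrix.transpose_transpose,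
      hMsymm, Matrix.transpose_zero] at h
    rw [← h]
  have hSBP' : Dpᵀ * M = -(M * Dm) := by
    rw [add_eq_zero_iff_eq_neg] at hSBP2
    exact hSBP2
  have hDmM : Dmᵀ * M = -(M * Dp) := by rw [hMDp, neg_neg]
  have hMD : (M * D)ᵀ = -(M * D) := by
    subst hD
    simp only [Matrix.transpose_smul, Matrix.transpose_mul, Matrix.transpose_add,
      Matrix.smul_mul, Matrix.mul_smul, Matrix.mul_add, Matrix.add_mul, hMsymm, hDmM, hSBP']
    module
  have hD1 : D.mulVec (fun _ => 1) = 0 := by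
    subst hD
    simp [Matrix.add_mulVec, Matrix.smul_mulVec, hDp1, hDm1]
  -- 𝟙ᵀ M D = 0 and 𝟙ᵀ M Dp = 0
  have hMD1 : (M * D).mulVec (fun _ => (1:ℝ)) = 0 := by
    rw [← Matrix.mulVec_mulVec, hD1, Matrix.mulVec_zero]
  have hvMD : (fun _ => (1:ℝ)) ᵥ* (M * D) = 0 := by
    rw [← Matrix.transpose_transpose (M * D), Matrix.vecMul_transpose, hMD,
      Matrix.neg_mulVec, hMD1, neg_zero]
  have hvMDp : (fun _ => (1:ℝ)) ᵥ* (M * Dp) = 0 := by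
    rw [hMDp, Matrix.vecMul_neg, ← Matrix.vecMul_vecMul, Matrix.vecMul_transpose, hDm1,
      Matrix.zero_vecMul, neg_zero]
  -- entrywise product with diagonal M
  have hMprod : ∀ a v : Fin N → ℝ, M.mulVec (a * v) = a * M.mulVec v := by
    intro a v; funext i
    simp [diag_mulVec_apply hMdiag]; ring
  have hassoc : M * (Dp * D * Dm) = M * Dp * (D * Dm) := by
    simp only [mul_assoc]
  -- mass derivative is zero
  have mass0 : ∀ t, (fun _ => (1:ℝ)) ⬝ᵥ M.mulVec (deriv η t) = 0 := by
    intro t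
    rw [hode t]
    set a := η t
    have t1 : (fun _ => (1:ℝ)) ⬝ᵥ M.mulVec (D.mulVec (a * a)) = 0 := by
      rw [Matrix.mulVec_mulVec, Matrix.dotProduct_mulVec, hvMD, zero_dotProduct]
    have t2 : (fun _ => (1:ℝ)) ⬝ᵥ M.mulVec (a * D.mulVec a) = 0 := by
      rw [hMprod]
      have h1 : (fun _ => (1:ℝ)) ⬝ᵥ (a * M.mulVec (D.mulVec a)) = a ⬝ᵥ M.mulVec (D.mulVec a) := by
        simp [dotProduct]
      rw [h1, Matrix.mulVec_mulVec]
      exact skew_self hMD a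
    have t3 : (fun _ => (1:ℝ)) ⬝ᵥ M.mulVec ((Dp * D * Dm).mulVec a) = 0 := by
      rw [Matrix.mulVec_mulVec, Matrix.dotProduct_mulVec, hassoc, ← Matrix.vecMul_vecMul,
        hvMDp, Matrix.zero_vecMul, zero_dotProduct]
    simp only [Matrix.mulVec_sub, Matrix.mulVec_smul, Matrix.mulVec_add,
      dotProduct_sub, dotProduct_smul, dotProduct_add, t1, t2, t3]
    simp
  -- energy derivative is zero
  have energy0 : ∀ t, η t ⬝ᵥ M.mulVec (deriv η t) = 0 := by
    intro t
    rw [hode t]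
    set a := η t
    have t1 : a ⬝ᵥ M.mulVec (D.mulVec (a * a)) + a ⬝ᵥ M.mulVec (a * D.mulVec a) = 0 := by
      have h1 : a ⬝ᵥ M.mulVec (D.mulVec (a * a)) = a ⬝ᵥ (M * D).mulVec (a * a) := by
        rw [Matrix.mulVec_mulVec]
      have h2 : a ⬝ᵥ M.mulVec (a * D.mulVec a) = (a * a) ⬝ᵥ (M * D).mulVec a := by
        rw [hMprod, ← Matrix.mulVec_mulVec]
        simp [dotProduct]
        apply Finset.sum_congr rfl; intro i _; ring
      rw [h1, h2, skew_pairing hMD]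
      ring
    have t2 : a ⬝ᵥ M.mulVec ((Dp * D * Dm).mulVec a) = 0 := by
      have b := Dm.mulVec a
      calc a ⬝ᵥ M.mulVec ((Dp * D * Dm).mulVec a)
          = a ⬝ᵥ (M * (Dp * D * Dm)).mulVec a := by rw [Matrix.mulVec_mulVec]
        _ = a ⬝ᵥ (M * Dp * (D * Dm)).mulVec a := by rw [hassoc]
        _ = a ⬝ᵥ (M * Dp).mulVec ((D * Dm).mulVec a) := by rw [Matrix.mulVec_mulVec]
        _ = -(a ⬝ᵥ (Dmᵀ * M).mulVec ((D * Dm).mulVec a)) := by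
            rw [hMDp, Matrix.neg_mulVec, dotProduct_neg]
        _ = -((a ᵥ* (Dmᵀ * M)) ⬝ᵥ (D * Dm).mulVec a) := by rw [Matrix.dotProduct_mulVec]
        _ = -(((Dm.mulVec a) ᵥ* M) ⬝ᵥ (D * Dm).mulVec a) := by
            rw [← Matrix.vecMul_vecMul, Matrix.vecMul_transpose]
        _ = -((Dm.mulVec a) ⬝ᵥ M.mulVec ((D * Dm).mulVec a)) := by
            rw [← Matrix.dotProduct_mulVec]
        _ = -((Dm.mulVec a) ⬝ᵥ (M * D).mulVec (Dm.mulVec a)) := by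
            rw [← Matrix.mulVec_mulVec a D Dm, Matrix.mulVec_mulVec (Dm.mulVec a) M D]
        _ = 0 := by rw [skew_self hMD (Dm.mulVec a), neg_zero]
    simp only [Matrix.mulVec_sub, Matrix.mulVec_smul, Matrix.mulVec_add,
      dotProduct_sub, dotProduct_smul, dotProduct_add, t2]
    simp only [smul_eq_mul]
    linarith [t1]
  -- derivatives of the components
  have hcomp : ∀ t i, HasDerivAt (fun s => η s i) (deriv η t i) t := fun t i =>
    (hasDerivAt_pi.mp (hη t).hasDerivAt) i
  -- mass function
  have hmassfun : ∀ x : Fin N → ℝ,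
      (fun _ => (1:ℝ)) ⬝ᵥ M.mulVec x = ∑ i, M i i * x i := by
    intro x
    simp [dotProduct, diag_mulVec_apply hMdiag]
  have hmass : ∀ t, HasDerivAt (fun s => (fun _ => (1:ℝ)) ⬝ᵥ M.mulVec (η s)) 0 t := by
    intro t
    have H : HasDerivAt (fun s => ∑ i, M i i * η s i) (∑ i, M i i * deriv η t i) t :=
      HasDerivAt.fun_sum (fun i _ => (hcomp t i).const_mul (M i i))
    have hz : (∑ i, M i i * deriv η t i) = 0 := by
      rw [← hmassfun]; exact mass0 t
    rw [hz] at H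
    have hfg : (fun s => (fun _ => (1:ℝ)) ⬝ᵥ M.mulVec (η s))
        = (fun s => ∑ i, M i i * η s i) := funext fun s => hmassfun (η s)
    rw [hfg]
    exact H
  -- energy function
  have henergyfun : ∀ x : Fin N → ℝ,
      (1/2 : ℝ) * (x ⬝ᵥ M.mulVec x) = ∑ i, (1/2) * M i i * x i * x i := by
    intro x
    simp [dotProduct, diag_mulVec_apply hMdiag, Finset.mul_sum]
    apply Finset.sum_congr rfl; intro i _; ring
  have henergy : ∀ t, HasDerivAt (fun s => (1/2 : ℝ) * (η s ⬝ᵥ M.mulVec (η s))) 0 t := by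
    intro t
    have H : HasDerivAt (fun s => ∑ i, (1/2 : ℝ) * M i i * η s i * η s i)
        (∑ i, (1/2 : ℝ) * M i i * (deriv η t i * η t i + η t i * deriv η t i)) t := by
      apply HasDerivAt.fun_sum
      intro i _
      have := ((hcomp t i).fun_mul (hcomp t i)).const_mul ((1/2 : ℝ) * M i i)
      have hf : (fun s => (1/2 : ℝ) * M i i * η s i * η s i)
          = fun y => 1/2 * M i i * (η y i * η y i) := by
        funext s; ring
      rw [hf]; exact this
    have hz : (∑ i, (1/2 : ℝ) * M i i * (deriv η t i * η t i + η t i * deriv η t i)) = 0 := by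
      have h1 : (∑ i, (1/2 : ℝ) * M i i * (deriv η t i * η t i + η t i * deriv η t i))
          = η t ⬝ᵥ M.mulVec (deriv η t) := by
        simp only [dotProduct, diag_mulVec_apply hMdiag]
        apply Finset.sum_congr rfl; intro i _; ring
      rw [h1]; exact energy0 t
    rw [hz] at H
    have hfg : (fun s => (1/2 : ℝ) * (η s ⬝ᵥ M.mulVec (η s)))
        = (fun s => ∑ i, (1/2 : ℝ) * M i i * η s i * η s i) :=
      funext fun s => henergyfun (η s)
    rw [hfg]
    exact H
  constructor
  · intro t₁ t₂
    exact is_const_of_deriv_eq_zero (fun t => (hmass t).differentiableAt)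
      (fun t => (hmass t).deriv) t₁ t₂
  · intro t₁ t₂
    exact is_const_of_deriv_eq_zero (fun t => (henergy t).differentiableAt)
      (fun t => (henergy t).deriv) t₁ t₂
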